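/- Let ∃X[F] be an ∃CNF formula, let C be a clause of F falsified by an assignment q, and let v be a variable of X \ Vars(q). Let s be the shortest assignment falsifying C, i.e., the restriction of q to V(C). Then the D-sequent (∃X[F], s, {v}) → {v} holds. -/

import Mathlib

open scoped Classical

namespace QE

variable {α : Type*}

/-- A literal: a variable together with a polarity. -/
abbrev Lit (α : Type*) := α × Bool

/-- A clause: a finite disjunction of literals. -/
abbrev Clause (α : Type*) := Finset (Lit α)

/-- A CNF formula: a finite conjunction of clauses. -/
abbrev CNF (α : Type*) := Finset (Clause α)

/-- A (partial) assignment of Boolean values to variables. -/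
abbrev Assign (α : Type*) := α → Option Bool

/-- The variables of a clause. -/
def clauseVars (C : Clause α) : Set α := {v | ∃ b, (v, b) ∈ C}

/-- The variables of a CNF formula. -/
def cnfVars (F : CNF α) : Set α := ⋃ C ∈ F, clauseVars C

/-- The variables assigned by a partial assignment. -/
def avars (q : Assign α) : Set α := {v | q v ≠ none}

/-- The (partial) assignment `r` extends the (partial) assignment `q`, i.e. `q ⊆ r`. -/
def AExtends (q r : Assign α) : Prop := ∀ v b, q v = some b → r v = some b

/-- The complete assignment (point) `p` extends the partial assignment `q`, i.e. `q ⊆ p`. -/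
def PExtends (q : Assign α) (p : α → Bool) : Prop := ∀ v b, q v = some b → p v = b

/-- A complete assignment satisfies a clause. -/
def pointSatClause (p : α → Bool) (C : Clause α) : Prop := ∃ l ∈ C, p l.1 = l.2

/-- A complete assignment satisfies a CNF formula. -/
def pointSatCNF (p : α → Bool) (F : CNF α) : Prop := ∀ C ∈ F, pointSatClause p C

/-- A partial assignment satisfies a clause. -/
def asatClause (q : Assign α) (C : Clause α) : Prop := ∃ l ∈ C, q l.1 = some l.2

/-- A partial assignment falsifies a literal. -/
def afalsLit (q : Assign α) (l : Lit α) : Prop := q l.1 = some (!l.2)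

/-- The cofactor of a clause: remove the literals falsified by `q`. -/
noncomputable def cofClause (q : Assign α) (C : Clause α) : Clause α :=
  C.filter (fun l => ¬ afalsLit q l)

/-- The cofactor `F|q`: remove clauses satisfied by `q` and delete from the
remaining clauses all literals falsified by `q`. -/
noncomputable def cofactor (q : Assign α) (F : CNF α) : CNF α :=
  (F.filter (fun C => ¬ asatClause q C)).image (cofClause q)

/-- The CNF formula `F` implies the clause `C`. -/
def Implies (F : CNF α) (C : Clause α) : Prop :=
  ∀ p : α → Bool, pointSatCNF p F → pointSatClause p C

/-- `C` is a `Z`-clause: `V(C) ∩ Z ≠ ∅`. -/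
def IsZClause (Z : Set α) (C : Clause α) : Prop := (clauseVars C ∩ Z).Nonempty

/-- `F^Z`: the set of `Z`-clauses of `F`. -/
noncomputable def zClauses (F : CNF α) (Z : Set α) : CNF α :=
  F.filter (fun C => IsZClause Z C)

/-- `p` is a `Z`-boundary point of `F`: `Z ≠ ∅`, `p` falsifies `F`, every clause of `F`
falsified by `p` is a `Z`-clause, and the latter condition fails for every proper subset of `Z`. -/
def BoundaryPt (F : CNF α) (Z : Set α) (p : α → Bool) : Prop :=
  Z.Nonempty ∧ ¬ pointSatCNF p F ∧
  (∀ C ∈ F, ¬ pointSatClause p C → IsZClause Z C) ∧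
  (∀ Z' ⊂ Z, ¬ (∀ C ∈ F, ¬ pointSatClause p C → IsZClause Z' C))

/-- A point `p` is `W`-removable in `F`: there is a clause `C` such that `F` implies `C`,
`p` falsifies `C`, and `V(C) ∩ W = ∅`. -/
def Removable (F : CNF α) (W : Set α) (p : α → Bool) : Prop :=
  ∃ C : Clause α, Implies F C ∧ ¬ pointSatClause p C ∧ clauseVars C ∩ W = ∅

/-- The variables of `Z` are redundant in `∃X[F]` with scope `W`: for every nonempty
subset `Vs ⊆ Z` there is no `W`-removable `Vs`-boundary point of `F`. -/
def RedundantWithScope (F : CNF α) (Z W : Set α) : Prop :=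
  ∀ Vs : Set α, Vs ⊆ Z → Vs.Nonempty →
    ∀ p : α → Bool, BoundaryPt F Vs p → ¬ Removable F W p

/-- The D-sequent `(∃X[F], q, W) → Z`: the variables of `Z` are redundant
in `∃X[F|q]` with scope `W`. -/
def DSeq (F : CNF α) (X : Set α) (q : Assign α) (W Z : Set α) : Prop :=
  RedundantWithScope (cofactor q F) Z W

/-- `∃X[F] ≡ ∃X[H]`. -/
def ExEquiv (X : Set α) (F H : CNF α) : Prop :=
  ∀ p : α → Bool,
    (∃ p' : α → Bool, (∀ v ∉ X, p' v = p v) ∧ pointSatCNF p' F) ↔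
    (∃ p' : α → Bool, (∀ v ∉ X, p' v = p v) ∧ pointSatCNF p' H)

/-- The variables of `Z` are redundant in `∃X[F]`: `∃X[F] ≡ ∃X[F \ F^Z]`. -/
noncomputable def Redundant (F : CNF α) (X Z : Set α) : Prop :=
  ExEquiv X F (F \ zClauses F Z)

/-- Clauses `C` and `C'` contain opposite literals of the variable `w`. -/
def oppLitOn (C C' : Clause α) (w : α) : Prop := ∃ b, (w, b) ∈ C ∧ (w, !b) ∈ C'

/-- Clauses `C` and `C'` are resolvable on `v`: they contain opposite literals of
exactly one variable, namely `v`. -/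
def ResolvableOn (C C' : Clause α) (v : α) : Prop := ∀ w, oppLitOn C C' w ↔ w = v

/-- A variable `v` is blocked in `F`: no two clauses of `F` are resolvable on `v`. -/
def BlockedVar (F : CNF α) (v : α) : Prop :=
  ∀ C ∈ F, ∀ C' ∈ F, ¬ ResolvableOn C C' v

/-- Assignments `q` and `q'` assign opposite values to the variable `w`. -/
def aOppOn (q q' : Assign α) (w : α) : Prop := ∃ b, q w = some b ∧ q' w = some (!b)

/-- Assignments `q` and `q'` are resolvable on `v`: exactly one variable assigned by
both of them, namely `v`, is assigned opposite values. -/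
def AResolvableOn (q q' : Assign α) (v : α) : Prop := ∀ w, aOppOn q q' w ↔ w = v

/-- The resolvent of assignments `q` and `q'` on `v`: all single-variable assignments
of `q` and `q'` except those to `v`. -/
noncomputable def aResolvent (q q' : Assign α) (v : α) : Assign α :=
  fun w => if w = v then none else ((q w).orElse (fun _ => q' w))




/-- Lemma 5: Let `C` be a clause of `F` falsified by an assignment `q` and
let `v ∈ X \ Vars(q)`. Let `s` be the shortest assignment falsifying `C`, i.e. the
restriction of `q` to `V(C)`. Then the D-sequent `(∃X[F], s, {v}) → {v}` holds. -/
theorem dseq_falsified_clause {α : Type*} (F : CNF α) (X : Set α) (q : Assign α)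
    (C : Clause α) (v : α)
    (hX : X ⊆ cnfVars F) (hq : avars q ⊆ cnfVars F)
    (hC : C ∈ F) (hfals : ∀ l ∈ C, afalsLit q l)
    (hv : v ∈ X \ avars q) :
    DSeq F X (fun w => if w ∈ clauseVars C then q w else none) {v} {v} := by
  set s : Assign α := fun w => if w ∈ clauseVars C then q w else none with hs
  have hsfals : ∀ l ∈ C, afalsLit s l := by
    intro l hl
    have hvar : l.1 ∈ clauseVars C := ⟨l.2, by cases l; exact hl⟩
    simpa [afalsLit, hs, hvar] using hfals l hl
  have hnsat : ¬ asatClause s C := by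
    rintro ⟨l, hl, hsat⟩
    have := hsfals l hl
    rw [afalsLit] at this
    rw [hsat] at this
    simp at this
  have hempty : (∅ : Clause α) ∈ cofactor s F := by
    refine Finset.mem_image.mpr ⟨C, Finset.mem_filter.mpr ⟨hC, hnsat⟩, ?_⟩
    apply Finset.filter_false_of_mem
    intro l hl
    simpa using hsfals l hl
  intro Vs _ _ p hbp _
  obtain ⟨_, _, h3, _⟩ := hbp
  have := h3 ∅ hempty (by rintro ⟨l, hl, _⟩; exact absurd hl (Finset.notMem_empty l))
  obtain ⟨w, hw, _⟩ := this
  obtain ⟨b, hb⟩ := hw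
  exact absurd hb (Finset.notMem_empty _)

end QE
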